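/- Fix s ∈ ℝ and w > 0 with w ≠ s. For 0 < ε < 1 one has |log((w - s + iε)/(w - s - iε))| ≤ 2π if w ≤ s + 1, and |log((w - s + iε)/(w - s - iε))| ≤ 2/(w - s) if w ≥ s + 1. -/

import Mathlib

open Complex Real

lemma abs_log_of_abs_eq_one {z : ℂ} (hz : ‖z‖ = 1) :
    ‖Complex.log z‖ ≤ π := by
  rw [Complex.log, hz, Real.log_one]
  simpa using Complex.abs_arg_le_pi z

/-- The uniform dominating bound for the jump computation: for `0 < ε < 1`,
`|log((w-s+iε)/(w-s-iε))| ≤ 2π` if `w ≤ s+1` and `≤ 2/(w-s)` if `w ≥ s+1`. -/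
theorem log_ratio_bound (s w : ℝ) (hw : 0 < w) (hws : w ≠ s)
    (ε : ℝ) (hε0 : 0 < ε) (hε1 : ε < 1) :
    (w ≤ s + 1 →
      ‖Complex.log ((((w : ℂ) - s) + ε * Complex.I) /
        (((w : ℂ) - s) - ε * Complex.I))‖ ≤ 2 * π) ∧
    (s + 1 ≤ w →
      ‖Complex.log ((((w : ℂ) - s) + ε * Complex.I) /
        (((w : ℂ) - s) - ε * Complex.I))‖ ≤ 2 / (w - s)) := by
  set a : ℝ := w - s with ha
  have hcoe : ((w : ℂ) - s) = (a : ℂ) := by push_cast [ha]; ring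
  set z0 : ℂ := (a : ℂ) + ε * Complex.I with hz0
  have hre : z0.re = a := by simp [hz0]
  have him : z0.im = ε := by simp [hz0]
  have hz0ne : z0 ≠ 0 := by
    intro h
    rw [h] at him
    simp at him
    exact absurd him.symm (ne_of_gt hε0)
  have hconj : (starRingEnd ℂ) z0 = ((w : ℂ) - s) - ε * Complex.I := by
    rw [hcoe, hz0]
    simp
    ring
  have habs1 : ‖((w : ℂ) - s) + ε * Complex.I‖ /
      ‖((w : ℂ) - s) - ε * Complex.I‖ = 1 := by
    rw [← hconj, hcoe, ← hz0, Complex.norm_conj, div_self (by simpa using hz0ne)]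
  constructor
  · intro _
    have := abs_log_of_abs_eq_one (z := (((w : ℂ) - s) + ε * Complex.I) /
        (((w : ℂ) - s) - ε * Complex.I)) (by rw [norm_div]; exact habs1)
    refine this.trans ?_
    nlinarith [Real.pi_pos]
  · intro h1
    have ha1 : 1 ≤ a := by linarith
    have ha0 : 0 < a := lt_of_lt_of_le one_pos ha1
    set r : ℝ := Complex.arg z0 with hr
    have htan : Real.tan r = ε / a := by rw [hr, Complex.tan_arg, him, hre]
    have hrlt : r < π / 2 := by
      have := Complex.abs_arg_lt_pi_div_two_iff.mpr (Or.inl (by rw [hre]; exact ha0))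
      exact lt_of_le_of_lt (le_abs_self _) this
    have hrnn : 0 ≤ r := Complex.arg_nonneg_iff.mpr (by rw [him]; exact le_of_lt hε0)
    have hrpos : 0 < r := by
      rcases lt_or_eq_of_le hrnn with h | h
      · exact h
      · exfalso
        have : Real.tan r = 0 := by rw [← h, Real.tan_zero]
        rw [htan] at this
        exact absurd this (ne_of_gt (div_pos hε0 ha0))
    -- z0 / conj z0 = exp (2 r I)
    have hz0eq : z0 = ((‖z0‖ : ℝ) : ℂ) * Complex.exp (r * Complex.I) :=
      (Complex.norm_mul_exp_arg_mul_I z0).symm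
    have hconjeq : (starRingEnd ℂ) z0 =
        ((‖z0‖ : ℝ) : ℂ) * Complex.exp (-r * Complex.I) := by
      conv_lhs => rw [hz0eq]
      rw [map_mul, ← Complex.exp_conj]
      congr 1
      · simp
      · congr 1
        simp [Complex.ext_iff]
    have habsne : ((‖z0‖ : ℝ) : ℂ) ≠ 0 := by
      simpa using hz0ne
    obtain ⟨R, hRne, hR1, hR2⟩ : ∃ R : ℂ, R ≠ 0 ∧ z0 = R * Complex.exp (r * Complex.I) ∧
        (starRingEnd ℂ) z0 = R * Complex.exp (-r * Complex.I) := ⟨_, habsne, hz0eq, hconjeq⟩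
    have hdiv : (((w : ℂ) - s) + ε * Complex.I) / (((w : ℂ) - s) - ε * Complex.I) =
        Complex.exp ((2 * r : ℝ) * Complex.I) := by
      rw [← hconj, hcoe, ← hz0, hR2, hR1]
      rw [mul_div_mul_left _ _ hRne, ← Complex.exp_sub]
      congr 1
      push_cast
      ring
    rw [hdiv, Complex.log_exp (by simp; nlinarith [Real.pi_pos])
      (by simp; nlinarith)]
    simp only [norm_mul, Complex.norm_I, mul_one, Complex.norm_real, Real.norm_eq_abs]
    rw [_root_.abs_of_nonneg (by linarith), _root_.abs_of_nonneg hrnn]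
    have hrle : r ≤ ε / a := le_of_lt (lt_of_lt_of_le (Real.lt_tan hrpos hrlt) (le_of_eq htan))
    have : ε / a ≤ 1 / a := by
      apply div_le_div_of_nonneg_right <;> try positivity
      · exact le_of_lt hε1
    calc (2 : ℝ) * r ≤ 2 * (1 / a) := by nlinarith
      _ = 2 / a := by ring
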